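/- Every action of a countable group G on a finite set X is sofic. -/

import Mathlib

open scoped Classical Pointwise

noncomputable def hDist {A : Type*} [Fintype A] (σ τ : Equiv.Perm A) : ℝ :=
  ((Finset.univ.filter fun a => σ a ≠ τ a).card : ℝ) / (Fintype.card A : ℝ)

/-- `φ : G → Sym(Fin n)` is an `(F, E, ε)`-orbit approximation of the action `α : G ↷ X`. -/
def IsOrbitApprox {G X : Type*} [Group G] {n : ℕ} (α : G →* Equiv.Perm X)
    (F : Finset G) (E : Finset X) (ε : ℝ) (φ : G → Equiv.Perm (Fin n)) : Prop :=
  ∃ (m : ℕ) (S : Finset (Fin n)) (π : Fin n → X → Fin m),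
    ((S.card : ℝ) > (1 - ε) * (n : ℝ)) ∧
    (∀ s ∈ S, Set.InjOn (π s) (E : Set X)) ∧
    (∀ s ∈ S, ∀ g ∈ F, ∀ x ∈ E, φ g s ∈ S → α g⁻¹ x ∈ E →
      π (φ g s) x = π s (α g⁻¹ x))

/-- Soficity of an action `α : G ↷ X` given as a homomorphism `G →* Sym(X)`. -/
def SoficAction {G X : Type*} [Group G] (α : G →* Equiv.Perm X) : Prop :=
  ∀ (F : Finset G) (E : Finset X) (ε : ℝ), 0 < ε →
    ∃ (n : ℕ) (φ : G → Equiv.Perm (Fin n)),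
      φ 1 = 1 ∧
      (∀ g ∈ F, ∀ h ∈ F, hDist (φ (g * h)) (φ g * φ h) < ε) ∧
      IsOrbitApprox α F E ε φ

/-- Soficity of a group. -/
def SoficGroup (G : Type*) [Group G] : Prop :=
  ∀ (F : Finset G) (ε : ℝ), 0 < ε →
    ∃ (n : ℕ) (φ : G → Equiv.Perm (Fin n)),
      φ 1 = 1 ∧
      (∀ g ∈ F, ∀ h ∈ F, hDist (φ (g * h)) (φ g * φ h) < ε) ∧
      (∀ g ∈ F, g ≠ 1 → hDist 1 (φ g) > 1 - ε)

lemma hDist_self {A : Type*} [Fintype A] (σ : Equiv.Perm A) : hDist σ σ = 0 := by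
  simp [hDist]

theorem stmt_10 {G X : Type*} [Group G] [Countable G] [Finite X]
    (α : G →* Equiv.Perm X) :
    SoficAction α := by
  intro F E ε hε
  haveI : Fintype X := Fintype.ofFinite X
  haveI : Fintype α.range := Fintype.ofFinite _
  set Q := α.range with hQ
  let n := Fintype.card Q
  let e : Q ≃ Fin n := Fintype.equivFin Q
  let a : G → Q := fun g => ⟨α g, ⟨g, rfl⟩⟩
  have ha_mul : ∀ g h : G, a (g * h) = a g * a h := by
    intro g h; ext; simp [a, map_mul]
  let φ : G → Equiv.Perm (Fin n) :=
    fun g => (e.symm.trans (Equiv.mulLeft (a g))).trans e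
  have hφ_apply : ∀ g s, φ g s = e (a g * e.symm s) := fun g s => rfl
  have hφ_mul : ∀ g h, φ (g * h) = φ g * φ h := by
    intro g h
    ext s
    simp [hφ_apply, ha_mul, Equiv.Perm.mul_apply, mul_assoc]
  refine ⟨n, φ, ?_, ?_, ?_⟩
  · ext s
    have : a 1 = 1 := by ext; simp [a]
    simp [hφ_apply, this]
  · intro g _ h _
    rw [hφ_mul, hDist_self]
    exact hε
  · let m := Fintype.card X
    let eX : X ≃ Fin m := Fintype.equivFin X
    refine ⟨m, Finset.univ, fun s x => eX (((e.symm s : Q) : Equiv.Perm X)⁻¹ x), ?_, ?_, ?_⟩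
    · have hn : 1 ≤ (n : ℝ) := by
        have : 0 < n := Fintype.card_pos_iff.mpr ⟨1⟩
        exact_mod_cast this
      have : (1 - ε) * (n : ℝ) < 1 * n := by
        apply mul_lt_mul_of_pos_right _ (by linarith)
        linarith
      simpa using this.trans_le (by simp)
    · intro s _
      intro x _ y _ hxy
      have := eX.injective hxy
      exact (((e.symm s : Q) : Equiv.Perm X)⁻¹).injective this
    · intro s _ g _ x _ _ _
      have h1 : e.symm (φ g s) = a g * e.symm s := by
        rw [hφ_apply, Equiv.symm_apply_apply]
      simp only [h1, Subgroup.coe_mul, mul_inv_rev, Equiv.Perm.mul_apply, map_inv]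
      rfl
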